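/- arXiv:1102.4172 — 2 statements merged into one kernel-verified Lean document; each statement's English description precedes it below -/
import Mathlib

section
/- Let M be a group with a normal subgroup M⁰, let T ≤ B be subgroups of M⁰ such that: (i) N_{M⁰}(B) = B, (ii) B ∩ N_{M⁰}(T) = T, (iii) for every m ∈ M there exists m₁ ∈ M⁰ with m⁻¹Bm = m₁⁻¹Bm₁, and (iv) any two conjugates of T contained in B are conjugate by an element of B. Then N_M(T)/T is the (internal) semidirect product of the normal subgroup N_{M⁰}(T)/T by the subgroup N_M(T,B)/T, where N_M(T,B) denotes the simultaneous normalizer of T and B in M. -/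
private lemma mem_map_conj' {M : Type*} [Group M] (g x : M) (T : Subgroup M) :
    x ∈ Subgroup.map (MulAut.conj g).toMonoidHom T ↔ g⁻¹ * x * g ∈ T := by
  constructor
  · rintro ⟨t, ht, rfl⟩
    simpa [MulAut.conj_apply, mul_assoc] using ht
  · intro h
    exact ⟨g⁻¹ * x * g, h, by simp [MulAut.conj_apply]; group⟩

/-- Abstract form of Lemma 4.2(1): under hypotheses (i)-(iv), `N_M(T)/T` is the internal
semidirect product of the normal subgroup `N_{M⁰}(T)/T` by `N_M(T,B)/T`.  This is stated
at the group level: `N_{M⁰}(T)` is normalized by `N_M(T)`, every element of `N_M(T)`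
factors as a product of an element of `N_{M⁰}(T)` and an element of `N_M(T,B)`, and the
intersection `N_{M⁰}(T) ∩ N_M(T,B)` equals `T`. -/
theorem normalizer_semidirect_decomposition {M : Type*} [Group M]
    (M0 T B : Subgroup M) [M0.Normal] (hTB : T ≤ B) (hBM0 : B ≤ M0)
    (h1 : Subgroup.normalizer (B : Set M) ⊓ M0 = B)
    (h2 : B ⊓ Subgroup.normalizer (T : Set M) = T)
    (h3 : ∀ m : M, ∃ m1 ∈ M0, ∀ x : M, m⁻¹ * x * m ∈ B ↔ m1⁻¹ * x * m1 ∈ B)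
    (h4 : ∀ g h : M,
      Subgroup.map (MulAut.conj g).toMonoidHom T ≤ B →
      Subgroup.map (MulAut.conj h).toMonoidHom T ≤ B →
      ∃ b ∈ B, Subgroup.map (MulAut.conj b).toMonoidHom
          (Subgroup.map (MulAut.conj g).toMonoidHom T) =
        Subgroup.map (MulAut.conj h).toMonoidHom T) :
    (∀ n ∈ Subgroup.normalizer (T : Set M), ∀ x ∈ Subgroup.normalizer (T : Set M) ⊓ M0, n * x * n⁻¹ ∈ Subgroup.normalizer (T : Set M) ⊓ M0) ∧
    (∀ n ∈ Subgroup.normalizer (T : Set M), ∃ x ∈ Subgroup.normalizer (T : Set M) ⊓ M0, ∃ y ∈ Subgroup.normalizer (T : Set M) ⊓ Subgroup.normalizer (B : Set M),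
      n = x * y) ∧
    (Subgroup.normalizer (T : Set M) ⊓ M0) ⊓ (Subgroup.normalizer (T : Set M) ⊓ Subgroup.normalizer (B : Set M)) = T := by
  refine ⟨?_, ?_, ?_⟩
  · rintro n hn x ⟨hx1, hx2⟩
    exact ⟨(Subgroup.normalizer (T : Set M)).mul_mem ((Subgroup.normalizer (T : Set M)).mul_mem hn hx1) ((Subgroup.normalizer (T : Set M)).inv_mem hn),
      Subgroup.Normal.conj_mem ‹M0.Normal› x hx2 n⟩
  · intro n hn
    obtain ⟨m1, hm1, hmB⟩ := h3 n
    set y := m1⁻¹ * n with hy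
    have hyB : ∀ x : M, y⁻¹ * x * y ∈ B ↔ x ∈ B := by
      intro x
      have h := hmB (m1 * x * m1⁻¹)
      have e1 : n⁻¹ * (m1 * x * m1⁻¹) * n = y⁻¹ * x * y := by rw [hy]; group
      have e2 : m1⁻¹ * (m1 * x * m1⁻¹) * m1 = x := by group
      rw [e1, e2] at h
      exact h
    have hyN : y ∈ (Subgroup.normalizer (B : Set M)) := by
      rw [Subgroup.mem_normalizer_iff]
      intro x
      constructor
      · intro hx
        have := (hyB (y * x * y⁻¹)).1 (by
          have : y⁻¹ * (y * x * y⁻¹) * y = x := by group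
          rw [this]; exact hx)
        exact this
      · intro hx
        have e : y⁻¹ * (y * x * y⁻¹) * y = x := by group
        exact e ▸ (hyB (y * x * y⁻¹)).2 hx
    have hyT : Subgroup.map (MulAut.conj y).toMonoidHom T ≤ B := by
      intro z hz
      rw [mem_map_conj'] at hz
      have := (hyB z).1 (hTB hz)
      exact this
    have h1T : Subgroup.map (MulAut.conj (1 : M)).toMonoidHom T ≤ B := by
      intro z hz
      rw [mem_map_conj'] at hz
      simpa using hTB (by simpa using hz)
    obtain ⟨b, hbB, hb⟩ := h4 y 1 hyT h1T
    have hbyT : b * y ∈ (Subgroup.normalizer (T : Set M)) := by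
      rw [Subgroup.mem_normalizer_iff]
      intro x
      have key : ∀ z : M, y⁻¹ * (b⁻¹ * z * b) * y ∈ T ↔ z ∈ T := by
        intro z
        have := Subgroup.ext_iff.1 hb z
        rw [mem_map_conj', mem_map_conj', mem_map_conj'] at this
        simpa [mul_assoc] using this
      have e : y⁻¹ * (b⁻¹ * ((b*y) * x * (b*y)⁻¹) * b) * y = x := by group
      have hk := key ((b*y) * x * (b*y)⁻¹)
      rw [e] at hk
      exact hk
    have hbyNB : b * y ∈ (Subgroup.normalizer (B : Set M)) := (Subgroup.normalizer (B : Set M)).mul_mem (Subgroup.le_normalizer hbB) hyN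
    have ex : m1 * b⁻¹ = n * (b*y)⁻¹ := by rw [hy]; group
    refine ⟨m1 * b⁻¹, ⟨?_, M0.mul_mem hm1 (M0.inv_mem (hBM0 hbB))⟩,
      b * y, ⟨hbyT, hbyNB⟩, ?_⟩
    · rw [ex]; exact (Subgroup.normalizer (T : Set M)).mul_mem hn ((Subgroup.normalizer (T : Set M)).inv_mem hbyT)
    · rw [hy]; group
  · apply le_antisymm
    · rintro x ⟨⟨hxT, hxM0⟩, ⟨_, hxNB⟩⟩
      have hxB : x ∈ B := h1 ▸ (⟨hxNB, hxM0⟩ : x ∈ (Subgroup.normalizer (B : Set M)) ⊓ M0)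
      exact h2 ▸ (⟨hxB, hxT⟩ : x ∈ B ⊓ (Subgroup.normalizer (T : Set M)))
    · exact le_inf (le_inf Subgroup.le_normalizer (hTB.trans hBM0))
        (le_inf Subgroup.le_normalizer (hTB.trans Subgroup.le_normalizer))
end

section
/- Under the same hypotheses as the previous semidirect product decomposition, the map N_M(T,B)/T → M/M⁰ given by mT ↦ mM⁰ is a group isomorphism onto M/M⁰. -/
/-- Abstract form of Lemma 4.2(2): under the same hypotheses, the map
`N_M(T,B)/T → M/M⁰`, `mT ↦ mM⁰`, is a group isomorphism; i.e. the composite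
`N_M(T,B) → M → M/M⁰` is surjective and has kernel exactly `T`. -/
theorem normalizer_iso_component_group {M : Type*} [Group M]
    (M0 T B : Subgroup M) [M0.Normal] (hTB : T ≤ B) (hBM0 : B ≤ M0)
    (h1 : Subgroup.normalizer (B : Set M) ⊓ M0 = B)
    (h2 : B ⊓ Subgroup.normalizer (T : Set M) = T)
    (h3 : ∀ m : M, ∃ m1 ∈ M0, ∀ x : M, m⁻¹ * x * m ∈ B ↔ m1⁻¹ * x * m1 ∈ B)
    (h4 : ∀ g h : M,
      Subgroup.map (MulAut.conj g).toMonoidHom T ≤ B →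
      Subgroup.map (MulAut.conj h).toMonoidHom T ≤ B →
      ∃ b ∈ B, Subgroup.map (MulAut.conj b).toMonoidHom
          (Subgroup.map (MulAut.conj g).toMonoidHom T) =
        Subgroup.map (MulAut.conj h).toMonoidHom T) :
    (Function.Surjective fun x : (Subgroup.normalizer (T : Set M) ⊓ Subgroup.normalizer (B : Set M) : Subgroup M) =>
      (QuotientGroup.mk (x : M) : M ⧸ M0)) ∧
    (∀ x : (Subgroup.normalizer (T : Set M) ⊓ Subgroup.normalizer (B : Set M) : Subgroup M),
      (QuotientGroup.mk (x : M) : M ⧸ M0) = 1 ↔ (x : M) ∈ T) := by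
  constructor
  · intro q
    obtain ⟨m, rfl⟩ := QuotientGroup.mk_surjective q
    obtain ⟨m1, hm1, hspec⟩ := h3 m
    set n := m1⁻¹ * m with hn
    have hnB : n ∈ Subgroup.normalizer (B : Set M) := by
      rw [Subgroup.mem_normalizer_iff]
      intro h
      have key := hspec (m * h * m⁻¹)
      have e1 : m⁻¹ * (m * h * m⁻¹) * m = h := by group
      have e2 : m1⁻¹ * (m * h * m⁻¹) * m1 = n * h * n⁻¹ := by rw [hn]; group
      rw [e1, e2] at key
      exact key
    have hTn : Subgroup.map (MulAut.conj n).toMonoidHom T ≤ B := by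
      rintro y ⟨t, ht, rfl⟩
      simp only [MulEquiv.coe_toMonoidHom, MulAut.conj_apply]
      exact (Subgroup.mem_normalizer_iff.mp hnB t).mp (hTB ht)
    have hone : Subgroup.map (MulAut.conj (1 : M)).toMonoidHom T = T := by
      ext y
      simp [Subgroup.mem_map]
    obtain ⟨b, hb, hbt⟩ := h4 n 1 hTn (by rw [hone]; exact hTB)
    rw [hone] at hbt
    set w := b * n with hw
    have hmap : ∀ y, (∃ t ∈ T, w * t * w⁻¹ = y) ↔ y ∈ T := by
      intro y
      have := SetLike.ext_iff.mp hbt y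
      simp only [Subgroup.mem_map, MulEquiv.coe_toMonoidHom, MulAut.conj_apply] at this
      constructor
      · rintro ⟨t, ht, rfl⟩
        refine this.mp ⟨n * t * n⁻¹, ⟨t, ht, rfl⟩, ?_⟩
        rw [hw]; group
      · intro hy
        obtain ⟨x, ⟨t, ht, rfl⟩, he⟩ := this.mpr hy
        refine ⟨t, ht, ?_⟩
        rw [← he, hw]; group
    have hwT : w ∈ Subgroup.normalizer (T : Set M) := by
      rw [Subgroup.mem_normalizer_iff]
      intro t
      constructor
      · intro ht
        exact (hmap (w * t * w⁻¹)).mp ⟨t, ht, rfl⟩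
      · intro ht
        obtain ⟨s, hs, he⟩ := (hmap (w * t * w⁻¹)).mpr ht
        have : s = t := by
          have := mul_right_cancel he
          exact mul_left_cancel this
        rwa [← this]
    have hwB : w ∈ Subgroup.normalizer (B : Set M) := mul_mem (Subgroup.le_normalizer hb) hnB
    refine ⟨⟨w, Subgroup.mem_inf.mpr ⟨hwT, hwB⟩⟩, ?_⟩
    show QuotientGroup.mk w = QuotientGroup.mk m
    rw [QuotientGroup.eq]
    have : w⁻¹ * m = m⁻¹ * (m1 * b⁻¹) * (m⁻¹)⁻¹ := by rw [hw, hn]; group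
    rw [this]
    exact Subgroup.Normal.conj_mem ‹M0.Normal› _ (mul_mem hm1 (inv_mem (hBM0 hb))) m⁻¹
  · intro x
    rw [QuotientGroup.eq_one_iff]
    constructor
    · intro hx
      have hx2 := Subgroup.mem_inf.mp x.2
      have hxB : (x : M) ∈ B := by
        have : (x : M) ∈ Subgroup.normalizer (B : Set M) ⊓ M0 := Subgroup.mem_inf.mpr ⟨hx2.2, hx⟩
        rwa [h1] at this
      have : (x : M) ∈ B ⊓ Subgroup.normalizer (T : Set M) := Subgroup.mem_inf.mpr ⟨hxB, hx2.1⟩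
      rwa [h2] at this
    · intro hx
      exact hBM0 (hTB hx)
end
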